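/- Let δ > 0, η > 0, β > 0 and ∇ ≥ 0 be real constants. Then the function H(τ) = (φ(τ) + ∇)/τ is convex on the interval [1, ∞) of real numbers. (Proposition 3: under unreliable behavior of clients with a fixed total number of iterations T, the variable part of the convergence upper bound is a convex function of the number of local epochs τ, treating τ as a continuous variable.) -/

import Mathlib

open Real Set Filter

/-- Helper key inequality: `exp s * ((s-1)^2 + 1) ≥ 2` for `s ≥ 0`. -/
private lemma key_exp_ineq {s : ℝ} (hs : 0 ≤ s) :
    2 ≤ Real.exp s * ((s - 1) ^ 2 + 1) := by
  have h1 : 1 + s + s ^ 2 / 2 ≤ Real.exp s := by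
    have := Real.sum_le_exp_of_nonneg hs 3
    simp [Finset.sum_range_succ] at this
    nlinarith [this]
  nlinarith [sq_nonneg s, sq_nonneg (s - 1), sq_nonneg (s ^ 2)]

private noncomputable def G (c L d n : ℝ) (τ : ℝ) : ℝ :=
  ((c * (Real.exp (L * τ) - 1) - d * τ) + n) / τ

private noncomputable def G1 (c L n : ℝ) (τ : ℝ) : ℝ :=
  (c * L * Real.exp (L * τ) * τ - c * Real.exp (L * τ) + c - n) / τ ^ 2

private noncomputable def G2 (c L n : ℝ) (τ : ℝ) : ℝ :=
  (c * L ^ 2 * Real.exp (L * τ) * τ ^ 2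
    - 2 * (c * L * Real.exp (L * τ) * τ - c * Real.exp (L * τ) + c - n)) / τ ^ 3

private lemma hasDerivAt_G (c L d n : ℝ) {τ : ℝ} (hτ : τ ≠ 0) :
    HasDerivAt (G c L d n) (G1 c L n τ) τ := by
  have h1 : HasDerivAt (fun τ : ℝ => Real.exp (L * τ)) (Real.exp (L * τ) * L) τ := by
    simpa using ((hasDerivAt_id τ).const_mul L).exp
  have hnum : HasDerivAt (fun τ : ℝ => (c * (Real.exp (L * τ) - 1) - d * τ) + n)
      (c * (Real.exp (L * τ) * L) - d * 1) τ :=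
    (((h1.sub_const 1).const_mul c).sub ((hasDerivAt_id τ).const_mul d)).add_const n
  have hdiv := hnum.div (hasDerivAt_id τ) hτ
  refine hdiv.congr_deriv ?_
  simp only [id]
  unfold G1
  field_simp
  ring

private lemma hasDerivAt_G1 (c L n : ℝ) {τ : ℝ} (hτ : τ ≠ 0) :
    HasDerivAt (G1 c L n) (G2 c L n τ) τ := by
  have h1 : HasDerivAt (fun τ : ℝ => Real.exp (L * τ)) (Real.exp (L * τ) * L) τ := by
    simpa using ((hasDerivAt_id τ).const_mul L).exp
  have hnum : HasDerivAt
      (fun τ : ℝ => c * L * Real.exp (L * τ) * τ - c * Real.exp (L * τ) + c - n)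
      ((c * L * (Real.exp (L * τ) * L)) * τ + (c * L * Real.exp (L * τ)) * 1
        - c * (Real.exp (L * τ) * L)) τ := by
    exact ((((h1.const_mul (c * L)).mul (hasDerivAt_id τ)).sub
      (h1.const_mul c)).add_const c).sub_const n
  have hden : HasDerivAt (fun τ : ℝ => τ ^ 2) (2 * τ ^ 1) τ := by
    simpa using hasDerivAt_pow 2 τ
  have hdiv := hnum.div hden (pow_ne_zero 2 hτ)
  refine hdiv.congr_deriv ?_
  unfold G2
  field_simp
  ring

theorem prop3_H_convexOn (δ η β nabla : ℝ)
    (hδ : 0 < δ) (hη : 0 < η) (hβ : 0 < β) (hnabla : 0 ≤ nabla) :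
    ConvexOn ℝ (Set.Ici (1 : ℝ))
      (fun τ : ℝ => (((δ / β) * ((η * β + 1) ^ τ - 1) - η * δ * τ) + nabla) / τ) := by
  have ha1 : (1:ℝ) < η * β + 1 := by nlinarith
  have ha0 : (0:ℝ) < η * β + 1 := by linarith
  set c := δ / β with hc
  have hc0 : 0 < c := div_pos hδ hβ
  set L := Real.log (η * β + 1) with hLdef
  have hL0 : 0 < L := Real.log_pos ha1
  have hfun : (fun τ : ℝ => (((δ / β) * ((η * β + 1) ^ τ - 1) - η * δ * τ) + nabla) / τ)
      = G c L (η * δ) nabla := by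
    funext τ
    rw [G, Real.rpow_def_of_pos ha0]
  rw [hfun]
  have hIoi : interior (Set.Ici (1:ℝ)) = Set.Ioi 1 := interior_Ici
  -- pointwise facts
  have hne : ∀ x ∈ Set.Ioi (1:ℝ), x ≠ 0 := fun x hx => ne_of_gt (lt_trans one_pos hx)
  have hderiv : ∀ x ∈ Set.Ioi (1:ℝ), deriv (G c L (η * δ) nabla) x = G1 c L nabla x :=
    fun x hx => (hasDerivAt_G c L (η * δ) nabla (hne x hx)).deriv
  have heq : ∀ x ∈ Set.Ioi (1:ℝ),
      deriv (G c L (η * δ) nabla) =ᶠ[nhds x] G1 c L nabla := by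
    intro x hx
    filter_upwards [IsOpen.mem_nhds isOpen_Ioi hx] with y hy
    exact hderiv y hy
  apply convexOn_of_deriv2_nonneg (convex_Ici 1)
  · -- continuity
    apply ContinuousOn.div
    · fun_prop
    · fun_prop
    · intro x hx; exact ne_of_gt (lt_of_lt_of_le one_pos hx)
  · rw [hIoi]
    intro x hx
    exact ((hasDerivAt_G c L (η * δ) nabla (hne x hx)).differentiableAt).differentiableWithinAt
  · rw [hIoi]
    intro x hx
    exact (((hasDerivAt_G1 c L nabla (hne x hx)).differentiableAt).congr_of_eventuallyEq
      (heq x hx)).differentiableWithinAt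
  · rw [hIoi]
    intro x hx
    have h2 : deriv^[2] (G c L (η * δ) nabla) x = G2 c L nabla x := by
      have : deriv (deriv (G c L (η * δ) nabla)) x = deriv (G1 c L nabla) x :=
        (heq x hx).deriv_eq
      simp only [Function.iterate_succ, Function.iterate_zero, Function.comp_apply, id]
      rw [this, (hasDerivAt_G1 c L nabla (hne x hx)).deriv]
    rw [h2]
    unfold G2
    apply div_nonneg _ (le_of_lt (pow_pos (lt_trans one_pos hx) 3))
    have hs : 0 ≤ L * x := le_of_lt (mul_pos hL0 (lt_trans one_pos hx))
    have hkey := key_exp_ineq hs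
    nlinarith [hkey, hc0, hnabla]
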